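/- Let α ∈ A^+ be self-overlap free and let Σ∗ = α(A* − A*αA*). Then every word w ∈ αA* ∩ A*α admits a unique factorization w = w_1 w_2 ⋯ w_k α with each w_i ∈ Σ∗. -/

import Mathlib

def SelfOverlapFree {A : Type*} (w : List A) : Prop :=
  ∀ p : List A, p ≠ [] → p.length < w.length → p <+: w → ¬ p <:+ w

def IsFactor {A : Type*} (α w : List A) : Prop :=
  ∃ x y : List A, w = x ++ α ++ y

def SigmaStar {A : Type*} (α : List A) : Set (List A) :=
  { w | ∃ t : List A, w = α ++ t ∧ ¬ IsFactor α t }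

private lemma lemA {A : Type*} {α : List A} (hne : α ≠ []) (hsof : SelfOverlapFree α)
    {u z : List A} (h1 : α <+: u ++ z) (h2 : α <+: z) (hu : u ≠ []) : α <+: u := by
  by_cases hlen : α.length ≤ u.length
  · exact List.prefix_of_prefix_length_le h1 (u.prefix_append z) hlen
  · push_neg at hlen
    have hua : u <+: α :=
      List.prefix_of_prefix_length_le (u.prefix_append z) h1 (le_of_lt hlen)
    obtain ⟨p, hp⟩ := hua
    rcases eq_or_ne p [] with rfl | hpne
    · simp at hp; exact hp ▸ List.prefix_refl u
    · exfalso
      have hpz : p <+: z := by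
        have : u ++ p <+: u ++ z := hp ▸ h1
        exact (List.prefix_append_right_inj u).mp this
      have hppre : p <+: α := by
        refine List.prefix_of_prefix_length_le hpz h2 ?_
        have := congrArg List.length hp
        simp at this
        omega
      have hpsuf : p <:+ α := ⟨u, hp⟩
      have hplt : p.length < α.length := by
        have := congrArg List.length hp
        simp at this
        have : 0 < u.length := List.length_pos_iff.mpr hu
        omega
      exact hsof p hpne hplt hppre hpsuf

private lemma lemB {A : Type*} {α : List A} (hne : α ≠ []) (hsof : SelfOverlapFree α)
    {w : List A} (h1 : α <+: w) (h2 : α <:+ w) : w = α ∨ ∃ t, w = α ++ t ++ α := by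
  obtain ⟨s, hs⟩ := h1
  rcases eq_or_ne s [] with rfl | hsne
  · left; simpa using hs.symm
  · right
    by_cases hlen : α.length ≤ s.length
    · have hsw : s <:+ w := hs ▸ List.suffix_append α s
      have hsuf : α <:+ s := List.suffix_of_suffix_length_le h2 hsw hlen
      obtain ⟨t, ht⟩ := hsuf
      exact ⟨t, by rw [← hs, ← ht, List.append_assoc]⟩
    · exfalso
      push_neg at hlen
      have hssuf : s <:+ w := hs ▸ List.suffix_append α s
      have hsα : s <:+ α := List.suffix_of_suffix_length_le hssuf h2 (le_of_lt hlen)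
      obtain ⟨p, hp⟩ := hsα
      obtain ⟨u, hu⟩ := h2
      -- w = α ++ s = u ++ α, α = p ++ s, so u ++ p ++ s = α ++ s, hence α = u ++ p
      have hup : u ++ p = α := by
        have : (u ++ p) ++ s = α ++ s := by
          rw [List.append_assoc, hp, hu, hs]
        exact List.append_cancel_right this
      have hpne : p ≠ [] := by
        intro h; subst h
        have := congrArg List.length hp
        simp at this; omega
      have hplt : p.length < α.length := by
        have := congrArg List.length hp
        have h0 : 0 < s.length := List.length_pos_iff.mpr hsne
        simp at this; omega
      exact hsof p hpne hplt ⟨s, hp⟩ ⟨u, hup⟩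

private lemma exist_aux {A : Type*} (α : List A) (hne : α ≠ []) (t : List A) :
    ∃ l : List (List A), (∀ x ∈ l, x ∈ SigmaStar α) ∧ α ++ t ++ α = l.flatten ++ α := by
  by_cases h : IsFactor α t
  · obtain ⟨x, y, hxy⟩ := h
    obtain ⟨l1, h1, e1⟩ := exist_aux α hne x
    obtain ⟨l2, h2, e2⟩ := exist_aux α hne y
    refine ⟨l1 ++ l2, ?_, ?_⟩
    · intro z hz
      rcases List.mem_append.1 hz with hz | hz
      · exact h1 z hz
      · exact h2 z hz
    · subst hxy
      rw [List.flatten_append]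
      calc α ++ (x ++ α ++ y) ++ α = (α ++ x ++ α) ++ (y ++ α) := by
            simp [List.append_assoc]
        _ = (l1.flatten ++ α) ++ (y ++ α) := by rw [e1]
        _ = l1.flatten ++ (α ++ y ++ α) := by simp [List.append_assoc]
        _ = l1.flatten ++ (l2.flatten ++ α) := by rw [e2]
        _ = l1.flatten ++ l2.flatten ++ α := by simp [List.append_assoc]
  · exact ⟨[α ++ t], by intro z hz; simp at hz; exact hz ▸ ⟨t, rfl, h⟩, by simp⟩
termination_by t.length
decreasing_by
  · have h0 : 0 < α.length := List.length_pos_iff.mpr hne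
    have := congrArg List.length hxy
    simp at this
    omega
  · have h0 : 0 < α.length := List.length_pos_iff.mpr hne
    have := congrArg List.length hxy
    simp at this
    omega

private lemma flatten_prefix {A : Type*} {α : List A} {r : List (List A)}
    (hr : ∀ x ∈ r, x ∈ SigmaStar α) : α <+: r.flatten ++ α := by
  cases r with
  | nil => simp
  | cons x r =>
    obtain ⟨t, ht, -⟩ := hr x List.mem_cons_self
    rw [List.flatten_cons, ht]
    simp [List.append_assoc]

private lemma lemC {A : Type*} {α : List A} (hne : α ≠ []) (hsof : SelfOverlapFree α)
    {t s a b : List A} (heq : t ++ a = s ++ b) (ha : α <+: a) (hb : α <+: b)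
    (hs : ¬ IsFactor α s) (hlen : t.length ≤ s.length) : t = s := by
  have ht : t <+: s :=
    List.prefix_of_prefix_length_le ⟨a, heq⟩ (s.prefix_append b) hlen
  obtain ⟨u, rfl⟩ := ht
  rcases eq_or_ne u [] with rfl | hu
  · simp
  · exfalso
    have hab : a = u ++ b := by
      have : t ++ a = t ++ (u ++ b) := by rw [heq, List.append_assoc]
      exact List.append_cancel_left this
    have : α <+: u := lemA hne hsof (hab ▸ ha) hb hu
    obtain ⟨u', hu'⟩ := this
    exact hs ⟨t, u', by rw [← hu', List.append_assoc]⟩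

private lemma uniq_aux {A : Type*} {α : List A} (hne : α ≠ []) (hsof : SelfOverlapFree α) :
    ∀ l1 l2 : List (List A), (∀ x ∈ l1, x ∈ SigmaStar α) → (∀ x ∈ l2, x ∈ SigmaStar α) →
      l1.flatten ++ α = l2.flatten ++ α → l1 = l2 := by
  intro l1
  induction l1 with
  | nil =>
    intro l2 _ h2 heq
    cases l2 with
    | nil => rfl
    | cons y r2 =>
      exfalso
      obtain ⟨s, hy, -⟩ := h2 y List.mem_cons_self
      rw [hy] at heq
      have h0 : 0 < α.length := List.length_pos_iff.mpr hne
      have hlen := congrArg List.length heq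
      simp [List.length_append] at hlen
      exact hne hlen.2.2
  | cons x r1 ih =>
    intro l2 h1 h2 heq
    cases l2 with
    | nil =>
      exfalso
      obtain ⟨s, hx, -⟩ := h1 x List.mem_cons_self
      rw [hx] at heq
      have hlen := congrArg List.length heq
      simp [List.length_append] at hlen
      exact hne hlen.2.2
    | cons y r2 =>
      obtain ⟨t, hx, hxt⟩ := h1 x List.mem_cons_self
      obtain ⟨s, hy, hys⟩ := h2 y List.mem_cons_self
      have hr1 : ∀ z ∈ r1, z ∈ SigmaStar α := fun z hz => h1 z (List.mem_cons_of_mem x hz)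
      have hr2 : ∀ z ∈ r2, z ∈ SigmaStar α := fun z hz => h2 z (List.mem_cons_of_mem y hz)
      have heq' : t ++ (r1.flatten ++ α) = s ++ (r2.flatten ++ α) := by
        have : α ++ (t ++ (r1.flatten ++ α)) = α ++ (s ++ (r2.flatten ++ α)) := by
          simpa [hx, hy, List.append_assoc] using heq
        exact List.append_cancel_left this
      have hts : t = s := by
        rcases le_total t.length s.length with hle | hle
        · exact lemC hne hsof heq' (flatten_prefix hr1) (flatten_prefix hr2) hys hle
        · exact (lemC hne hsof heq'.symm (flatten_prefix hr2) (flatten_prefix hr1) hxt hle).symm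
      subst hts
      have hrest : r1.flatten ++ α = r2.flatten ++ α := List.append_cancel_left heq'
      rw [hx, hy, ih r2 hr1 hr2 hrest]

theorem unique_sigmaStar_factorisation {A : Type*} (α : List A) (hne : α ≠ [])
    (hsof : SelfOverlapFree α) (w : List A) (h1 : α <+: w) (h2 : α <:+ w) :
    ∃! l : List (List A), (∀ x ∈ l, x ∈ SigmaStar α) ∧ w = l.flatten ++ α := by
  have hex : ∃ l : List (List A), (∀ x ∈ l, x ∈ SigmaStar α) ∧ w = l.flatten ++ α := by
    rcases lemB hne hsof h1 h2 with rfl | ⟨t, rfl⟩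
    · exact ⟨[], by simp⟩
    · obtain ⟨l, hl, hl'⟩ := exist_aux α hne t
      exact ⟨l, hl, hl'⟩
  obtain ⟨l, hl⟩ := hex
  refine ⟨l, hl, fun l' hl' => ?_⟩
  exact uniq_aux hne hsof l' l hl'.1 hl.1 (hl'.2 ▸ hl.2 ▸ rfl)
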